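/- Given a finite automaton with translucent letters (FATL) M and a positive integer c, the language L(M, ≤ c) = { w ∈ L(M) : jc_M(w) ≤ c } is regular. Consequently, JCL(1) (languages accepted by FATL with O(1) jumping complexity) equals the class of regular languages. -/

import Mathlib

/-- A nondeterministic finite automaton with translucent letters (FATL): an NFA whose partial
transition function (`δ q a = ∅` meaning "undefined") is extended with jumping steps. -/
structure FATL (V : Type) where
  /-- States. -/
  Q : Type
  [fQ : Fintype Q]
  /-- Transition function (`∅` = undefined). -/
  δ : Q → V → Set Q
  /-- Initial state. -/
  q₀ : Q
  /-- Final states. -/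
  F : Set Q

variable {V : Type}

/-- `M.Steps c c' k` : the FATL `M` goes from configuration `c` (state, remaining word) to
configuration `c'` using exactly `k` jumping steps. An ordinary step consumes the first letter;
a jumping step `(q, x a y) ↷ (p, x y)` (with `x` nonempty) consumes a letter `a` with
`p ∈ δ q a`, provided `δ q b` is undefined for every letter `b` occurring in `x`. -/
inductive FATL.Steps (M : FATL V) : M.Q × List V → M.Q × List V → ℕ → Prop
  | refl (c : M.Q × List V) : Steps M c c 0
  | ord {p q : M.Q} {y : List V} {c : M.Q × List V} {k : ℕ} {a : V}
      (h : p ∈ M.δ q a) (ih : Steps M (p, y) c k) : Steps M (q, a :: y) c k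
  | jump {p q : M.Q} {x y : List V} {c : M.Q × List V} {k : ℕ} {a : V}
      (h : p ∈ M.δ q a) (hx : x ≠ []) (hblock : ∀ b ∈ x, M.δ q b = ∅)
      (ih : Steps M (p, x ++ y) c k) : Steps M (q, x ++ a :: y) c (k + 1)

/-- The word `w` is accepted using exactly `k` jumping steps. -/
def FATL.AcceptsN (M : FATL V) (w : List V) (k : ℕ) : Prop :=
  ∃ f ∈ M.F, M.Steps (M.q₀, w) (f, []) k

/-- The language accepted by an FATL. -/
def FATL.language (M : FATL V) : Language V := {w | ∃ k, M.AcceptsN w k}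

/-- Jumping complexity of a word: the minimal number of jumping steps over all accepting
computations (`0` if the word is not accepted). -/
noncomputable def FATL.jcW (M : FATL V) (w : List V) : ℕ :=
  sInf {k | M.AcceptsN w k}

/-- Jumping complexity of the FATL: maximum over words of length `n`. -/
noncomputable def FATL.jcFun (M : FATL V) (n : ℕ) : ℕ :=
  sSup {m | ∃ w : List V, w.length = n ∧ M.jcW w = m}

/-- `f ∈ O(h)` for `ℕ`-valued functions. -/
def InO (f h : ℕ → ℕ) : Prop := ∃ c : ℕ, ∀ n, f n ≤ c * h n + c

/-- `f ∈ Ω(n)`: there is a rational constant `1/c > 0` with `f n ≥ n/c` for infinitely many `n`. -/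
def InOmegaLinear (f : ℕ → ℕ) : Prop := ∃ c : ℕ, 0 < c ∧ ∀ m : ℕ, ∃ n ≥ m, n ≤ c * f n

/-- The class `JCL(f)` of languages accepted by some FATL with jumping complexity in `O(f)`. -/
def JCL (V : Type) (f : ℕ → ℕ) : Set (Language V) :=
  {L | ∃ M : FATL V, M.language = L ∧ InO M.jcFun f}

/-! ### Auxiliary development -/

namespace FATLAux

variable {V : Type}

/-- Ordinary (jump-free) runs of the underlying NFA. -/
def Rsteps (M : FATL V) (q : M.Q) (w : List V) (q' : M.Q) : Prop :=
  M.Steps (q, w) (q', []) 0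

/-- Full inversion principle for `FATL.Steps`. -/
lemma steps_inv {M : FATL V} {c1 c2 : M.Q × List V} {k : ℕ} (h : M.Steps c1 c2 k) :
    (c1 = c2 ∧ k = 0) ∨
    (∃ p a y, c1.2 = a :: y ∧ p ∈ M.δ c1.1 a ∧ M.Steps (p, y) c2 k) ∨
    (∃ p x a y k', c1.2 = x ++ a :: y ∧ k = k' + 1 ∧ p ∈ M.δ c1.1 a ∧ x ≠ [] ∧
      (∀ b ∈ x, M.δ c1.1 b = ∅) ∧ M.Steps (p, x ++ y) c2 k') := by
  cases h with
  | refl c => exact Or.inl ⟨rfl, rfl⟩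
  | ord h ih => exact Or.inr (Or.inl ⟨_, _, _, rfl, h, ih⟩)
  | jump h hx hB ih => exact Or.inr (Or.inr ⟨_, _, _, _, _, rfl, rfl, h, hx, hB, ih⟩)

lemma rsteps_nil_iff {M : FATL V} {q q' : M.Q} : Rsteps M q [] q' ↔ q = q' := by
  constructor
  · intro h
    rcases steps_inv h with ⟨h1, -⟩ | ⟨p, a, y, h1, -⟩ | ⟨p, x, a, y, k', h1, hk, -⟩
    · exact congrArg Prod.fst h1
    · exact absurd h1 (by simp)
    · exact absurd hk (by omega)
  · rintro rfl; exact FATL.Steps.refl _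

lemma rsteps_cons_iff {M : FATL V} {q q' : M.Q} {a : V} {w : List V} :
    Rsteps M q (a :: w) q' ↔ ∃ p ∈ M.δ q a, Rsteps M p w q' := by
  constructor
  · intro h
    rcases steps_inv h with ⟨h1, -⟩ | ⟨p, a', y, h1, hp, hst⟩ | ⟨p, x, a', y, k', h1, hk, -⟩
    · exact absurd (congrArg Prod.snd h1) (by simp)
    · have h1' : a :: w = a' :: y := h1
      injection h1' with e1 e2
      subst e1; subst e2
      exact ⟨p, hp, hst⟩
    · exact absurd hk (by omega)
  · rintro ⟨p, hp, h⟩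
    exact FATL.Steps.ord hp h

lemma rsteps_append_iff {M : FATL V} {q q' : M.Q} {u v : List V} :
    Rsteps M q (u ++ v) q' ↔ ∃ s, Rsteps M q u s ∧ Rsteps M s v q' := by
  induction u generalizing q with
  | nil => simp [rsteps_nil_iff]
  | cons a u IH =>
    simp only [List.cons_append, rsteps_cons_iff, IH]
    constructor
    · rintro ⟨p, hp, s, h1, h2⟩; exact ⟨s, ⟨p, hp, h1⟩, h2⟩
    · rintro ⟨s, ⟨p, hp, h1⟩, h2⟩; exact ⟨p, hp, s, h1, h2⟩

lemma rsteps_snoc_iff {M : FATL V} {q q' : M.Q} {w : List V} {b : V} :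
    Rsteps M q (w ++ [b]) q' ↔ ∃ s, Rsteps M q w s ∧ q' ∈ M.δ s b := by
  rw [rsteps_append_iff]
  refine exists_congr fun s => and_congr_right fun _ => ?_
  rw [rsteps_cons_iff]
  constructor
  · rintro ⟨p, hp, h⟩
    rw [rsteps_nil_iff] at h
    exact h ▸ hp
  · intro h; exact ⟨q', h, rsteps_nil_iff.2 rfl⟩

lemma steps_prepend {M : FATL V} {q q' : M.Q} {u v : List V} {cfg : M.Q × List V} {k : ℕ}
    (h : Rsteps M q u q') (h2 : M.Steps (q', v) cfg k) : M.Steps (q, u ++ v) cfg k := by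
  induction u generalizing q with
  | nil => rw [rsteps_nil_iff] at h; subst h; exact h2
  | cons a u IH =>
    rw [rsteps_cons_iff] at h
    obtain ⟨p, hp, h⟩ := h
    exact FATL.Steps.ord hp (IH h)

lemma steps_le_length {M : FATL V} {c1 c2 : M.Q × List V} {k : ℕ}
    (h : M.Steps c1 c2 k) : k + c2.2.length ≤ c1.2.length := by
  induction h with
  | refl c => simp
  | ord h ih IH => simp at IH ⊢; omega
  | jump h hx hB ih IH => simp at IH ⊢; omega

/-- Decomposition at the first jump. -/
lemma steps_decomp {M : FATL V} {c1 c2 : M.Q × List V} {k : ℕ}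
    (h : M.Steps c1 c2 k) :
    ∀ q w k', c1 = (q, w) → k = k' + 1 →
      ∃ q' p x a y u, w = u ++ (x ++ a :: y) ∧ Rsteps M q u q' ∧ x ≠ [] ∧
        (∀ b ∈ x, M.δ q' b = ∅) ∧ p ∈ M.δ q' a ∧ M.Steps (p, x ++ y) c2 k' := by
  induction h with
  | refl c =>
    intro q w k' hq hk; omega
  | @ord p0 q0 y0 c0 k0 a0 h ih IH =>
    intro q w k' hq hk
    injection hq with h1 h2
    subst h1; subst h2
    obtain ⟨q', p', x, a', y', u, hw, hu, hx, hB, hp, hrest⟩ := IH p0 y0 k' rfl hk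
    refine ⟨q', p', x, a', y', a0 :: u, by rw [hw]; rfl,
      rsteps_cons_iff.2 ⟨p0, h, hu⟩, hx, hB, hp, hrest⟩
  | @jump p0 q0 x0 y0 c0 k0 a0 h hx hB ih IH =>
    intro q w k' hq hk
    injection hq with h1 h2
    subst h1; subst h2
    have hk' : k0 = k' := by omega
    subst hk'
    exact ⟨q0, p0, x0, a0, y0, [], rfl, rsteps_nil_iff.2 rfl, hx, hB, h, ih⟩

/-- The language accepted from state `q` with at most `c` jumps. -/
def LeC (M : FATL V) (q : M.Q) (c : ℕ) : Language V :=
  {w | ∃ k ≤ c, ∃ f ∈ M.F, M.Steps (q, w) (f, []) k}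

/-- The underlying NFA with start state `q`. -/
def toNFA (M : FATL V) (q : M.Q) : NFA V M.Q := ⟨M.δ, {q}, M.F⟩

lemma mem_evalFrom_iff (M : FATL V) (q0 : M.Q) :
    ∀ (w : List V) (S : Set M.Q) (q' : M.Q),
      q' ∈ (toNFA M q0).evalFrom S w ↔ ∃ s ∈ S, Rsteps M s w q' := by
  intro w
  induction w with
  | nil => intro S q'; simp [rsteps_nil_iff, eq_comm]
  | cons a w IH =>
    intro S q'
    have h0 : (toNFA M q0).evalFrom S (a :: w) =
        (toNFA M q0).evalFrom ((toNFA M q0).stepSet S a) w := rfl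
    rw [h0, IH]
    simp only [NFA.mem_stepSet, rsteps_cons_iff]
    constructor
    · rintro ⟨p, ⟨s, hs, hp⟩, h⟩; exact ⟨s, hs, p, hp, h⟩
    · rintro ⟨s, hs, p, hp, h⟩; exact ⟨p, ⟨s, hs, hp⟩, h⟩

lemma nfa_isRegular {σ : Type} [Fintype σ] (N : NFA V σ) : N.accepts.IsRegular :=
  ⟨Set σ, inferInstance, N.toDFA, N.toDFA_correct⟩

lemma isRegular_iUnion {ι : Type} [Fintype ι] {f : ι → Language V}
    (h : ∀ i, (f i).IsRegular) : Language.IsRegular (Set.iUnion f) := by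
  classical
  choose σ inst D hD using h
  haveI : ∀ i, Fintype (σ i) := inst
  let Dpi : DFA V (∀ i, σ i) :=
    ⟨fun s a i => (D i).step (s i) a, fun i => (D i).start, {s | ∃ i, s i ∈ (D i).accept}⟩
  have key : ∀ (w : List V) (s : ∀ i, σ i),
      Dpi.evalFrom s w = fun i => (D i).evalFrom (s i) w := by
    intro w
    induction w with
    | nil => intro s; rfl
    | cons a w IH =>
      intro s
      show Dpi.evalFrom (Dpi.step s a) w = _
      rw [IH]
      rfl
  refine ⟨∀ i, σ i, inferInstance, Dpi, ?_⟩
  ext w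
  rw [DFA.mem_accepts]
  show Dpi.evalFrom Dpi.start w ∈ Dpi.accept ↔ _
  rw [key]
  refine Iff.trans ?_ (Set.mem_iUnion (s := f)).symm
  show (∃ i, (D i).evalFrom (D i).start w ∈ (D i).accept) ↔ _
  refine exists_congr fun i => ?_
  rw [← hD i]
  exact Iff.rfl

lemma list_snoc_inj {u w : List V} {a b : V} (h : u ++ [a] = w ++ [b]) :
    u = w ∧ a = b := by
  have h1 := congrArg List.reverse h
  simp only [List.reverse_append, List.reverse_cons, List.reverse_nil, List.nil_append,
    List.singleton_append, List.cons.injEq] at h1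
  exact ⟨List.reverse_injective h1.2, h1.1⟩

section Fuse

variable (M : FATL V) (q q' p : M.Q) {σ : Type} (D : DFA V σ)

/-- Fused NFA: an ordinary run of `M` from `q` to `q'`, then a nonempty segment `x` blocked at
`q'`, a letter `a` with `p ∈ δ q' a` (skipped by `D`), then a tail `y`, with `x ++ y ∈ D.accepts`.
-/
def fuse : NFA V (M.Q ⊕ σ × Bool) where
  step := fun s b => {s' |
    (∃ r r', s = Sum.inl r ∧ r' ∈ M.δ r b ∧ s' = Sum.inl r') ∨
    (s = Sum.inl q' ∧ M.δ q' b = ∅ ∧ s' = Sum.inr (D.step D.start b, false)) ∨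
    (∃ t, s = Sum.inr (t, false) ∧ M.δ q' b = ∅ ∧ s' = Sum.inr (D.step t b, false)) ∨
    (∃ t, s = Sum.inr (t, false) ∧ p ∈ M.δ q' b ∧ s' = Sum.inr (t, true)) ∨
    (∃ t, s = Sum.inr (t, true) ∧ s' = Sum.inr (D.step t b, true))}
  start := {Sum.inl q}
  accept := {s' | ∃ t ∈ D.accept, s' = Sum.inr (t, true)}

lemma fuse_eval (w : List V) :
    (∀ r, Sum.inl r ∈ (fuse M q q' p D).eval w ↔ Rsteps M q w r) ∧
    (∀ t, Sum.inr (t, false) ∈ (fuse M q q' p D).eval w ↔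
      ∃ u x, w = u ++ x ∧ Rsteps M q u q' ∧ x ≠ [] ∧ (∀ b ∈ x, M.δ q' b = ∅) ∧
        t = D.evalFrom D.start x) ∧
    (∀ t, Sum.inr (t, true) ∈ (fuse M q q' p D).eval w ↔
      ∃ u x a y, w = u ++ (x ++ a :: y) ∧ Rsteps M q u q' ∧ x ≠ [] ∧
        (∀ b ∈ x, M.δ q' b = ∅) ∧ p ∈ M.δ q' a ∧ t = D.evalFrom D.start (x ++ y)) := by
  induction w using List.reverseRecOn with
  | nil =>
    refine ⟨fun r => ?_, fun t => ?_, fun t => ?_⟩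
    · show Sum.inl r ∈ ({Sum.inl q} : Set _) ↔ _
      simp [rsteps_nil_iff, eq_comm]
    · show Sum.inr (t, false) ∈ ({Sum.inl q} : Set _) ↔ _
      simp only [Set.mem_singleton_iff]
      constructor
      · intro h; exact absurd h (by simp)
      · rintro ⟨u, x, hw, -, hx, -⟩
        obtain ⟨-, rfl⟩ := (List.append_eq_nil_iff).1 hw.symm
        exact absurd rfl hx
    · show Sum.inr (t, true) ∈ ({Sum.inl q} : Set _) ↔ _
      simp only [Set.mem_singleton_iff]
      constructor
      · intro h; exact absurd h (by simp)
      · rintro ⟨u, x, a, y, hw, -⟩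
        obtain ⟨-, h2⟩ := (List.append_eq_nil_iff).1 hw.symm
        exact absurd h2 (by simp)
  | append_singleton w b IH =>
    obtain ⟨IH1, IH2, IH3⟩ := IH
    rw [show (fuse M q q' p D).eval (w ++ [b]) =
      (fuse M q q' p D).stepSet ((fuse M q q' p D).eval w) b from
      NFA.eval_append_singleton _ _ _]
    refine ⟨fun r => ?_, fun t => ?_, fun t => ?_⟩
    · rw [NFA.mem_stepSet, rsteps_snoc_iff]
      constructor
      · rintro ⟨s, hs, hstep⟩
        rcases hstep with ⟨r0, r', rfl, hr', heq⟩ | ⟨-, -, heq⟩ | ⟨t0, -, -, heq⟩ |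
          ⟨t0, -, -, heq⟩ | ⟨t0, -, heq⟩
        · obtain rfl : r = r' := by simpa using heq
          exact ⟨r0, (IH1 r0).1 hs, hr'⟩
        · exact absurd heq (by simp)
        · exact absurd heq (by simp)
        · exact absurd heq (by simp)
        · exact absurd heq (by simp)
      · rintro ⟨s0, h1, h2⟩
        exact ⟨Sum.inl s0, (IH1 s0).2 h1, Or.inl ⟨s0, r, rfl, h2, rfl⟩⟩
    · rw [NFA.mem_stepSet]
      constructor
      · rintro ⟨s, hs, hstep⟩
        rcases hstep with ⟨r0, r', rfl, hr', heq⟩ | ⟨rfl, hB, heq⟩ | ⟨t0, rfl, hB, heq⟩ |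
          ⟨t0, rfl, -, heq⟩ | ⟨t0, rfl, heq⟩
        · exact absurd heq (by simp)
        · obtain rfl : t = D.step D.start b := by simpa using heq
          refine ⟨w, [b], rfl, (IH1 q').1 hs, by simp, ?_, by simp⟩
          intro b' hb'; rw [List.mem_singleton] at hb'; subst hb'; exact hB
        · obtain rfl : t = D.step t0 b := by simpa using heq
          obtain ⟨u, x, rfl, hu, hx, hxB, rfl⟩ := (IH2 t0).1 hs
          refine ⟨u, x ++ [b], by rw [List.append_assoc], hu, by simp, ?_, by simp⟩
          intro b' hb'
          rcases List.mem_append.1 hb' with h | h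
          · exact hxB b' h
          · rw [List.mem_singleton] at h; subst h; exact hB
        · exact absurd heq (by simp)
        · exact absurd heq (by simp)
      · rintro ⟨u, x, hw, hu, hx, hB, rfl⟩
        obtain rfl | ⟨x', c, rfl⟩ := x.eq_nil_or_concat'
        · exact absurd rfl hx
        · rw [← List.append_assoc] at hw
          obtain ⟨rfl, rfl⟩ := list_snoc_inj hw
          by_cases hx' : x' = []
          · subst hx'
            refine ⟨Sum.inl q', (IH1 q').2 (by simpa using hu), ?_⟩
            exact Or.inr (Or.inl ⟨rfl, hB b (by simp), by simp⟩)
          · refine ⟨Sum.inr (D.evalFrom D.start x', false),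
              (IH2 _).2 ⟨u, x', rfl, hu, hx', fun b' hb' => hB b' (by simp [hb']), rfl⟩, ?_⟩
            exact Or.inr (Or.inr (Or.inl ⟨_, rfl, hB b (by simp), by simp⟩))
    · rw [NFA.mem_stepSet]
      constructor
      · rintro ⟨s, hs, hstep⟩
        rcases hstep with ⟨r0, r', rfl, hr', heq⟩ | ⟨rfl, hB, heq⟩ | ⟨t0, rfl, hB, heq⟩ |
          ⟨t0, rfl, ha, heq⟩ | ⟨t0, rfl, heq⟩
        · exact absurd heq (by simp)
        · exact absurd heq (by simp)
        · exact absurd heq (by simp)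
        · have ht : t = t0 := by simpa using heq
          obtain ⟨u, x, rfl, hu, hx, hxB, ht0⟩ := (IH2 t0).1 hs
          exact ⟨u, x, b, [], by simp, hu, hx, hxB, ha, by simp [ht, ht0]⟩
        · have ht : t = D.step t0 b := by simpa using heq
          obtain ⟨u, x, a, y, rfl, hu, hx, hxB, ha, ht0⟩ := (IH3 t0).1 hs
          refine ⟨u, x, a, y ++ [b], by simp, hu, hx, hxB, ha, ?_⟩
          rw [ht, ht0, ← List.append_assoc, DFA.evalFrom_append_singleton]
      · rintro ⟨u, x, a, y, hw, hu, hx, hB, ha, rfl⟩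
        obtain rfl | ⟨y', c, rfl⟩ := y.eq_nil_or_concat'
        · have hw' : w ++ [b] = (u ++ x) ++ [a] := by
            rw [hw]; simp [List.append_assoc]
          obtain ⟨rfl, rfl⟩ := list_snoc_inj hw'
          refine ⟨Sum.inr (D.evalFrom D.start x, false),
            (IH2 _).2 ⟨u, x, rfl, hu, hx, hB, rfl⟩, ?_⟩
          exact Or.inr (Or.inr (Or.inr (Or.inl ⟨_, rfl, ha, by simp⟩)))
        · have hw' : w ++ [b] = (u ++ (x ++ a :: y')) ++ [c] := by
            rw [hw]; simp
          obtain ⟨rfl, rfl⟩ := list_snoc_inj hw'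
          refine ⟨Sum.inr (D.evalFrom D.start (x ++ y'), true),
            (IH3 _).2 ⟨u, x, a, y', rfl, hu, hx, hB, ha, rfl⟩, ?_⟩
          refine Or.inr (Or.inr (Or.inr (Or.inr ⟨_, rfl, ?_⟩)))
          rw [← List.append_assoc, DFA.evalFrom_append_singleton]

lemma fuse_accepts :
    (fuse M q q' p D).accepts = {w | ∃ u x a y, w = u ++ (x ++ a :: y) ∧ Rsteps M q u q' ∧
      x ≠ [] ∧ (∀ b ∈ x, M.δ q' b = ∅) ∧ p ∈ M.δ q' a ∧ (x ++ y) ∈ D.accepts} := by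
  ext w
  rw [NFA.mem_accepts]
  constructor
  · rintro ⟨s, hacc, hev⟩
    obtain ⟨t, ht, rfl⟩ := hacc
    obtain ⟨u, x, a, y, hw, hu, hx, hB, ha, rfl⟩ := ((fuse_eval M q q' p D w).2.2 t).1 hev
    exact ⟨u, x, a, y, hw, hu, hx, hB, ha, ht⟩
  · rintro ⟨u, x, a, y, hw, hu, hx, hB, ha, hacc⟩
    rw [DFA.mem_accepts] at hacc
    exact ⟨Sum.inr (D.evalFrom D.start (x ++ y), true), ⟨_, hacc, rfl⟩,
      ((fuse_eval M q q' p D w).2.2 _).2 ⟨u, x, a, y, hw, hu, hx, hB, ha, rfl⟩⟩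

end Fuse

lemma leC_zero_isRegular (M : FATL V) (q : M.Q) : (LeC M q 0).IsRegular := by
  haveI := M.fQ
  have heq : LeC M q 0 = (toNFA M q).accepts := by
    ext w
    rw [NFA.mem_accepts]
    constructor
    · rintro ⟨k, hk, f, hf, hst⟩
      obtain rfl : k = 0 := Nat.le_zero.1 hk
      exact ⟨f, hf, (mem_evalFrom_iff M q w {q} f).2 ⟨q, rfl, hst⟩⟩
    · rintro ⟨f, hf, hev⟩
      obtain ⟨s, hs, h⟩ := (mem_evalFrom_iff M q w {q} f).1 hev
      obtain rfl : s = q := hs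
      exact ⟨0, le_refl _, f, hf, h⟩
  rw [heq]
  exact nfa_isRegular _

lemma leC_isRegular (M : FATL V) : ∀ (c : ℕ) (q : M.Q), (LeC M q c).IsRegular := by
  haveI := M.fQ
  intro c
  induction c with
  | zero => exact leC_zero_isRegular M
  | succ c IH =>
    intro q
    have hdec : LeC M q (c + 1) = Set.iUnion (fun i : Option (M.Q × M.Q) =>
        (match i with
          | none => LeC M q 0
          | some (q', p) => {w | ∃ u x a y, w = u ++ (x ++ a :: y) ∧ Rsteps M q u q' ∧
              x ≠ [] ∧ (∀ b ∈ x, M.δ q' b = ∅) ∧ p ∈ M.δ q' a ∧ (x ++ y) ∈ LeC M p c})) := by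
      ext w
      constructor
      · rintro ⟨k, hk, f, hf, hst⟩
        refine Set.mem_iUnion.2 ?_
        match k with
        | 0 => exact ⟨none, 0, le_refl _, f, hf, hst⟩
        | k + 1 =>
          obtain ⟨q', p, x, a, y, u, hw, hu, hx, hB, hp, hrest⟩ :=
            steps_decomp hst q w k rfl rfl
          exact ⟨some (q', p), u, x, a, y, hw, hu, hx, hB, hp, k, by omega, f, hf, hrest⟩
      · intro hmem
        obtain ⟨i, hi⟩ := Set.mem_iUnion.1 hmem
        match i with
        | none =>
          obtain ⟨k, hk, f, hf, hst⟩ := hi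
          exact ⟨k, by omega, f, hf, hst⟩
        | some (q', p) =>
          obtain ⟨u, x, a, y, hw, hu, hx, hB, hp, k, hk, f, hf, hrest⟩ := hi
          refine ⟨k + 1, by omega, f, hf, ?_⟩
          rw [hw]
          exact steps_prepend hu (FATL.Steps.jump hp hx hB hrest)
    rw [hdec]
    apply isRegular_iUnion
    rintro (_ | ⟨q', p⟩)
    · exact leC_zero_isRegular M q
    · obtain ⟨σ, instσ, D, hD⟩ := IH p
      haveI := instσ
      have heq : (fuse M q q' p D).accepts =
          {w | ∃ u x a y, w = u ++ (x ++ a :: y) ∧ Rsteps M q u q' ∧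
            x ≠ [] ∧ (∀ b ∈ x, M.δ q' b = ∅) ∧ p ∈ M.δ q' a ∧ (x ++ y) ∈ LeC M p c} := by
        rw [fuse_accepts, hD]
      show Language.IsRegular {w | ∃ u x a y, w = u ++ (x ++ a :: y) ∧ Rsteps M q u q' ∧
            x ≠ [] ∧ (∀ b ∈ x, M.δ q' b = ∅) ∧ p ∈ M.δ q' a ∧ (x ++ y) ∈ LeC M p c}
      rw [← heq]
      exact nfa_isRegular _

lemma part1 (M : FATL V) (c : ℕ) :
    Language.IsRegular {w : List V | w ∈ M.language ∧ M.jcW w ≤ c} := by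
  have heq : {w : List V | w ∈ M.language ∧ M.jcW w ≤ c} = LeC M M.q₀ c := by
    ext w
    constructor
    · rintro ⟨⟨k, hk⟩, hle⟩
      have hne : Set.Nonempty {k | M.AcceptsN w k} := ⟨k, hk⟩
      have hmem : M.AcceptsN w (M.jcW w) := Nat.sInf_mem hne
      obtain ⟨f, hf, hst⟩ := hmem
      exact ⟨M.jcW w, hle, f, hf, hst⟩
    · rintro ⟨k, hk, f, hf, hst⟩
      have hacc : M.AcceptsN w k := ⟨f, hf, hst⟩
      exact ⟨⟨k, hacc⟩, le_trans (Nat.sInf_le hacc) hk⟩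
  rw [heq]
  exact leC_isRegular M c M.q₀

lemma jcW_le_length (M : FATL V) (w : List V) : M.jcW w ≤ w.length := by
  by_cases h : {k | M.AcceptsN w k}.Nonempty
  · obtain ⟨f, hf, hst⟩ := Nat.sInf_mem h
    have hl := steps_le_length hst
    simpa [FATL.jcW] using hl
  · rw [Set.not_nonempty_iff_eq_empty] at h
    unfold FATL.jcW
    rw [h, Nat.sInf_empty]
    exact Nat.zero_le _

lemma jcW_le_jcFun (M : FATL V) (w : List V) : M.jcW w ≤ M.jcFun w.length := by
  apply le_csSup
  · refine ⟨w.length, ?_⟩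
    rintro m ⟨w', hlen, rfl⟩
    calc M.jcW w' ≤ w'.length := jcW_le_length M w'
    _ = w.length := hlen
  · exact ⟨w, rfl, rfl⟩

/-- An FATL built from a DFA (with total transition function, hence no possible jumps). -/
def ofDFA {σ : Type} (inst : Fintype σ) (D : DFA V σ) : FATL V where
  Q := σ
  fQ := inst
  δ := fun s a => {D.step s a}
  q₀ := D.start
  F := D.accept

lemma ofDFA_steps {σ : Type} (inst : Fintype σ) (D : DFA V σ)
    {c1 c2 : (ofDFA inst D).Q × List V} {k : ℕ} (h : (ofDFA inst D).Steps c1 c2 k) :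
    k = 0 ∧ D.evalFrom c1.1 c1.2 = D.evalFrom c2.1 c2.2 := by
  induction h with
  | refl c => exact ⟨rfl, rfl⟩
  | @ord p0 q0 y0 c0 k0 a0 h ih IH =>
    have hp : p0 = D.step q0 a0 := h
    refine ⟨IH.1, ?_⟩
    show D.evalFrom (D.step q0 a0) y0 = _
    rw [← hp]
    exact IH.2
  | @jump p0 q0 x0 y0 c0 k0 a0 h hx hB ih IH =>
    exfalso
    obtain ⟨b, x', rfl⟩ := List.exists_cons_of_ne_nil hx
    have hb := hB b List.mem_cons_self
    exact Set.singleton_ne_empty (D.step q0 b) hb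

lemma ofDFA_run {σ : Type} (inst : Fintype σ) (D : DFA V σ) :
    ∀ (w : List V) (s : σ), (ofDFA inst D).Steps (s, w) (D.evalFrom s w, []) 0 := by
  intro w
  induction w with
  | nil => intro s; exact FATL.Steps.refl _
  | cons a w IH =>
    intro s
    exact FATL.Steps.ord (show D.step s a ∈ ({D.step s a} : Set σ) from rfl) (IH (D.step s a))

lemma regular_mem_JCL {L : Language V} (h : L.IsRegular) : L ∈ JCL V (fun _ => 1) := by
  obtain ⟨σ, instσ, D, hD⟩ := h
  refine ⟨ofDFA instσ D, ?_, 0, fun n => ?_⟩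
  · ext w
    constructor
    · rintro ⟨k, f, hf, hst⟩
      have h2 := (ofDFA_steps instσ D hst).2
      rw [← hD, DFA.mem_accepts]
      show D.evalFrom D.start w ∈ D.accept
      have : D.evalFrom D.start w = f := h2
      rw [this]
      exact hf
    · intro hw
      rw [← hD, DFA.mem_accepts] at hw
      exact ⟨0, D.eval w, hw, ofDFA_run instσ D w D.start⟩
  · have hjc : ∀ w : List V, (ofDFA instσ D).jcW w = 0 := by
      intro w
      by_cases hne : {k | (ofDFA instσ D).AcceptsN w k}.Nonempty
      · obtain ⟨f, hf, hst⟩ := Nat.sInf_mem hne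
        exact (ofDFA_steps instσ D hst).1
      · rw [Set.not_nonempty_iff_eq_empty] at hne
        unfold FATL.jcW
        rw [hne, Nat.sInf_empty]
    unfold FATL.jcFun
    by_cases hne : {m | ∃ w : List V, w.length = n ∧ (ofDFA instσ D).jcW w = m}.Nonempty
    · refine le_trans (csSup_le hne ?_) (Nat.zero_le _)
      rintro m ⟨w, -, rfl⟩
      exact le_of_eq (hjc w)
    · rw [Set.not_nonempty_iff_eq_empty] at hne
      rw [hne, csSup_empty]
      exact bot_le

lemma jcl_mem_regular {L : Language V} (h : L ∈ JCL V (fun _ => 1)) : L.IsRegular := by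
  obtain ⟨M, hM, c0, hc⟩ := h
  have heq : L = {w : List V | w ∈ M.language ∧ M.jcW w ≤ c0 * 1 + c0} := by
    ext w
    constructor
    · intro hw
      refine ⟨by rw [hM]; exact hw, ?_⟩
      exact le_trans (jcW_le_jcFun M w) (hc w.length)
    · rintro ⟨hw, -⟩
      rw [← hM]; exact hw
  rw [heq]
  exact part1 M _

end FATLAux

/-- For every FATL `M` and positive integer `c`, the language
`L(M, ≤ c) = { w ∈ L(M) : jc_M(w) ≤ c }` is regular; consequently `JCL(1)` equals the class
of regular languages. -/
theorem fatl_le_c_regular_and_JCL_one (V : Type) :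
    (∀ (M : FATL V) (c : ℕ), 0 < c →
        Language.IsRegular {w : List V | w ∈ M.language ∧ M.jcW w ≤ c}) ∧
    JCL V (fun _ => 1) = {L : Language V | L.IsRegular} := by
  constructor
  · intro M c _
    exact FATLAux.part1 M c
  · ext L
    exact ⟨FATLAux.jcl_mem_regular, FATLAux.regular_mem_JCL⟩
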